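/- Let X and Y be independent exponential random variables with rates α > 0 and β > 0 respectively. Then X − Y and min(X, Y) are independent. -/

import Mathlib

open MeasureTheory ProbabilityTheory Real
open scoped ENNReal NNReal

section Aux

/-- Pushing forward `μ.withDensity (g ∘ f)` along `f` gives `(μ.map f).withDensity g`. -/
lemma aux_map_withDensity {γ δ : Type*} [MeasurableSpace γ] [MeasurableSpace δ]
    (μ : Measure γ) {f : γ → δ} (hf : Measurable f) {g : δ → ℝ≥0∞} (hg : Measurable g) :
    (μ.withDensity (fun p => g (f p))).map f = (μ.map f).withDensity g := by
  ext s hs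
  rw [Measure.map_apply hf hs, withDensity_apply _ (hf hs), withDensity_apply _ hs,
    setLIntegral_map hs hg hf]

/-- The map `T(x,y) = (x - y, min x y)` preserves Lebesgue measure on `ℝ²`. -/
lemma aux_T_measurePreserving :
    MeasurePreserving (fun p : ℝ × ℝ => (p.1 - p.2, min p.1 p.2))
      ((volume : Measure ℝ).prod volume) ((volume : Measure ℝ).prod volume) := by
  have hL : MeasurePreserving (fun p : ℝ × ℝ => (p.1 - p.2, p.2))
      ((volume : Measure ℝ).prod volume) ((volume : Measure ℝ).prod volume) :=
    measurePreserving_sub_prod volume volume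
  have hR : MeasurePreserving
      (fun q : ℝ × ℝ => (q.1, q.2 + if q.1 < 0 then q.1 else 0))
      ((volume : Measure ℝ).prod volume) ((volume : Measure ℝ).prod volume) := by
    refine MeasurePreserving.skew_product (μc := (volume : Measure ℝ)) (μd := (volume : Measure ℝ))
      (g := fun u v => v + if u < 0 then u else 0) (MeasurePreserving.id volume) ?_
      (Filter.Eventually.of_forall fun u => ?_)
    · exact measurable_snd.add
        (Measurable.ite (measurableSet_lt measurable_fst measurable_const)
          measurable_fst measurable_const)
    · exact map_add_right_eq_self volume _
  have hcomp : (fun p : ℝ × ℝ => (p.1 - p.2, min p.1 p.2)) =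
      (fun q : ℝ × ℝ => (q.1, q.2 + if q.1 < 0 then q.1 else 0)) ∘
        (fun p : ℝ × ℝ => (p.1 - p.2, p.2)) := by
    funext p
    simp only [Function.comp_apply]
    refine Prod.ext rfl ?_
    by_cases h : p.1 - p.2 < 0
    · simp only [if_pos h]
      rw [min_eq_left (by linarith)]
      ring
    · simp only [if_neg h]
      rw [min_eq_right (by linarith)]
      ring
  rw [hcomp]
  exact hR.comp hL

end Aux

/-- If `X ~ Exp(α)` and `Y ~ Exp(β)` are independent, then `X - Y` and `min(X, Y)`
are independent. -/
theorem exp_diff_min_indep {Ω : Type*} [MeasurableSpace Ω] (μ : Measure Ω)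
    [IsProbabilityMeasure μ] {X Y : Ω → ℝ} (hX : Measurable X) (hY : Measurable Y)
    {α β : ℝ} (hα : 0 < α) (hβ : 0 < β) (hXY : IndepFun X Y μ)
    (hXd : μ.map X = expMeasure α) (hYd : μ.map Y = expMeasure β) :
    IndepFun (fun ω => X ω - Y ω) (fun ω => min (X ω) (Y ω)) μ := by
  have hαβ : 0 < α + β := by linarith
  have hs : α + β ≠ 0 := ne_of_gt hαβ
  -- density of the difference (asymmetric Laplace)
  set dd : ℝ → ℝ≥0∞ := fun u => ENNReal.ofReal
    (if 0 ≤ u then α * β / (α + β) * rexp (-(α * u)) else α * β / (α + β) * rexp (β * u))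
    with hdd_def
  set ee : ℝ → ℝ≥0∞ := exponentialPDF (α + β) with hee_def
  set T : ℝ × ℝ → ℝ × ℝ := fun p => (p.1 - p.2, min p.1 p.2) with hT_def
  have hTm : Measurable T := (measurable_fst.sub measurable_snd).prodMk
    (measurable_fst.min measurable_snd)
  have hddm : Measurable dd := by
    apply Measurable.ennreal_ofReal
    exact Measurable.ite measurableSet_Ici
      (measurable_const.mul (((measurable_id.const_mul α).neg).exp))
      (measurable_const.mul ((measurable_id.const_mul β).exp))
  have heem : Measurable ee := (measurable_exponentialPDFReal (α + β)).ennreal_ofReal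
  have hddtop : ∀ u, dd u ≠ ∞ := fun u => ENNReal.ofReal_ne_top
  -- key pointwise density identity
  have hkey : ∀ p : ℝ × ℝ, exponentialPDF α p.1 * exponentialPDF β p.2 =
      dd (p.1 - p.2) * ee (min p.1 p.2) := by
    rintro ⟨x, y⟩
    simp only [hdd_def, hee_def]
    rcases le_or_gt y x with h | h
    · -- min = y, x - y ≥ 0
      rw [min_eq_right h, if_pos (by linarith : (0:ℝ) ≤ x - y)]
      rcases le_or_gt 0 y with hy | hy
      · have hx : (0:ℝ) ≤ x := le_trans hy h
        rw [exponentialPDF_of_nonneg hx, exponentialPDF_of_nonneg hy,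
          exponentialPDF_of_nonneg hy,
          ← ENNReal.ofReal_mul (by positivity), ← ENNReal.ofReal_mul (by positivity)]
        congr 1
        have h1 : rexp (-(α * (x - y))) * rexp (-((α + β) * y)) =
            rexp (-(α * x)) * rexp (-(β * y)) := by
          rw [← Real.exp_add, ← Real.exp_add]
          ring_nf
        calc α * rexp (-(α * x)) * (β * rexp (-(β * y)))
            = α * β * (rexp (-(α * x)) * rexp (-(β * y))) := by ring
          _ = α * β * (rexp (-(α * (x - y))) * rexp (-((α + β) * y))) := by rw [h1]
          _ = α * β / (α + β) * rexp (-(α * (x - y))) *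
              ((α + β) * rexp (-((α + β) * y))) := by field_simp
      · rw [exponentialPDF_of_neg hy, exponentialPDF_of_neg hy, mul_zero, mul_zero]
    · -- min = x, x - y < 0
      rw [min_eq_left (le_of_lt h), if_neg (by push_neg; linarith : ¬ (0:ℝ) ≤ x - y)]
      rcases le_or_gt 0 x with hx | hx
      · have hy : (0:ℝ) ≤ y := le_trans hx (le_of_lt h)
        rw [exponentialPDF_of_nonneg hx, exponentialPDF_of_nonneg hy,
          exponentialPDF_of_nonneg hx,
          ← ENNReal.ofReal_mul (by positivity), ← ENNReal.ofReal_mul (by positivity)]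
        congr 1
        have h1 : rexp (β * (x - y)) * rexp (-((α + β) * x)) =
            rexp (-(α * x)) * rexp (-(β * y)) := by
          rw [← Real.exp_add, ← Real.exp_add]
          ring_nf
        calc α * rexp (-(α * x)) * (β * rexp (-(β * y)))
            = α * β * (rexp (-(α * x)) * rexp (-(β * y))) := by ring
          _ = α * β * (rexp (β * (x - y)) * rexp (-((α + β) * x))) := by rw [h1]
          _ = α * β / (α + β) * rexp (β * (x - y)) *
              ((α + β) * rexp (-((α + β) * x))) := by field_simp
      · rw [exponentialPDF_of_neg hx, exponentialPDF_of_neg hx, zero_mul, mul_zero]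
  -- probability measure instances
  haveI hPα : IsProbabilityMeasure (expMeasure α) := isProbabilityMeasure_expMeasure hα
  haveI hPβ : IsProbabilityMeasure (expMeasure β) := isProbabilityMeasure_expMeasure hβ
  haveI hPαβ : IsProbabilityMeasure (expMeasure (α + β)) :=
    isProbabilityMeasure_expMeasure hαβ
  haveI hDsf : SigmaFinite ((volume : Measure ℝ).withDensity dd) :=
    SigmaFinite.withDensity_of_ne_top' hddtop
  have hEexp : (volume : Measure ℝ).withDensity ee = expMeasure (α + β) := rfl
  haveI hEsf : SigmaFinite ((volume : Measure ℝ).withDensity ee) := by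
    rw [hEexp]; infer_instance
  -- the joint law of (X, Y)
  have hmapXY : μ.map (fun ω => (X ω, Y ω)) = (expMeasure α).prod (expMeasure β) := by
    rw [(indepFun_iff_map_prod_eq_prod_map_map hX.aemeasurable hY.aemeasurable).mp hXY,
      hXd, hYd]
  -- product of exponential measures as a withDensity over `ℝ²`
  have hprodD : ((volume : Measure ℝ).prod volume).withDensity
      (fun p => exponentialPDF α p.1 * exponentialPDF β p.2) =
      (expMeasure α).prod (expMeasure β) := by
    refine (Measure.prod_eq fun s t hss htt => ?_).symm
    rw [withDensity_apply _ (hss.prod htt), ← Measure.prod_restrict,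
      lintegral_prod_mul (f := exponentialPDF α) (g := exponentialPDF β)
        ((measurable_exponentialPDFReal α).ennreal_ofReal).aemeasurable
        ((measurable_exponentialPDFReal β).ennreal_ofReal).aemeasurable]
    show (∫⁻ x in s, exponentialPDF α x) * ∫⁻ y in t, exponentialPDF β y
        = expMeasure α s * expMeasure β t
    rw [show expMeasure α = volume.withDensity (exponentialPDF α) from rfl,
      show expMeasure β = volume.withDensity (exponentialPDF β) from rfl,
      withDensity_apply _ hss, withDensity_apply _ htt]
  -- withDensity of the product density splits as a product
  have hDE : ((volume : Measure ℝ).prod volume).withDensity (fun p => dd p.1 * ee p.2) =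
      ((volume : Measure ℝ).withDensity dd).prod ((volume : Measure ℝ).withDensity ee) := by
    refine (Measure.prod_eq fun s t hss htt => ?_).symm
    rw [withDensity_apply _ (hss.prod htt), ← Measure.prod_restrict,
      lintegral_prod_mul (f := dd) (g := ee) hddm.aemeasurable heem.aemeasurable,
      withDensity_apply _ hss, withDensity_apply _ htt]
  -- pushing forward along T
  have hmapT : μ.map (fun ω => (X ω - Y ω, min (X ω) (Y ω))) =
      ((volume : Measure ℝ).withDensity dd).prod ((volume : Measure ℝ).withDensity ee) := by
    have hc : (fun ω => (X ω - Y ω, min (X ω) (Y ω))) = T ∘ (fun ω => (X ω, Y ω)) := rfl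
    rw [hc, ← Measure.map_map hTm (hX.prodMk hY), hmapXY, ← hprodD]
    have hρ : (fun p : ℝ × ℝ => exponentialPDF α p.1 * exponentialPDF β p.2) =
        fun p => (fun q : ℝ × ℝ => dd q.1 * ee q.2) (T p) := by
      funext p; exact hkey p
    rw [hρ, aux_map_withDensity (g := fun q : ℝ × ℝ => dd q.1 * ee q.2) _ hTm
      ((hddm.comp measurable_fst).mul (heem.comp measurable_snd)),
      aux_T_measurePreserving.map_eq, hDE]
  -- total mass computations
  have hmeas_pair : Measurable (fun ω => (X ω - Y ω, min (X ω) (Y ω))) :=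
    (hX.sub hY).prodMk (hX.min hY)
  have hE1 : (volume : Measure ℝ).withDensity ee Set.univ = 1 := by
    rw [hEexp]; exact measure_univ
  have hD1 : (volume : Measure ℝ).withDensity dd Set.univ = 1 := by
    have h1 : μ.map (fun ω => (X ω - Y ω, min (X ω) (Y ω))) Set.univ = 1 := by
      rw [Measure.map_apply hmeas_pair MeasurableSet.univ, Set.preimage_univ, measure_univ]
    rw [hmapT] at h1
    rw [← Set.univ_prod_univ, Measure.prod_prod, hE1, mul_one] at h1
    exact h1
  -- marginals
  have hmapDiff : μ.map (fun ω => X ω - Y ω) = (volume : Measure ℝ).withDensity dd := by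
    have hc : (fun ω => X ω - Y ω) =
        Prod.fst ∘ (fun ω => (X ω - Y ω, min (X ω) (Y ω))) := rfl
    rw [hc, ← Measure.map_map measurable_fst hmeas_pair, hmapT, Measure.map_fst_prod,
      hE1, one_smul]
  have hmapMin : μ.map (fun ω => min (X ω) (Y ω)) = (volume : Measure ℝ).withDensity ee := by
    have hc : (fun ω => min (X ω) (Y ω)) =
        Prod.snd ∘ (fun ω => (X ω - Y ω, min (X ω) (Y ω))) := rfl
    rw [hc, ← Measure.map_map measurable_snd hmeas_pair, hmapT, Measure.map_snd_prod,
      hD1, one_smul]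
  exact (indepFun_iff_map_prod_eq_prod_map_map (f := fun ω => X ω - Y ω) (hX.sub hY).aemeasurable
    (hX.min hY).aemeasurable).mpr (by rw [hmapT, hmapDiff, hmapMin])
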